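/- Let a > 0, let b ∈ ℝ^n be a row vector, let m ∈ O(h), and let x ∈ ℝ^n with D_{a,b,m}(x) ≠ 0. Then the matrix p(a,b,m) applied to the column vector (1, x, −½|x|²) equals D_{a,b,m}(x) times the column vector (1, φ_{a,b,m}(x), −½|φ_{a,b,m}(x)|²), where |y|² = yᵀ h y. That is, the linear action of p(a,b,m) on the null cone corresponds, in the affine chart x ↦ [(1, x, −½|x|²)], to the conformal transformation φ_{a,b,m}. -/
import Mathlib


open Matrix

noncomputable section

abbrev Idx (p q : ℕ) : Type := Unit ⊕ (Fin (p + q)) ⊕ Unit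

/-- The diagonal quadratic form of signature `(p,q)` on `ℝ^n`, `n = p + q`. -/
def hMat (p q : ℕ) : Matrix (Fin (p + q)) (Fin (p + q)) ℝ :=
  Matrix.diagonal fun i => if (i : ℕ) < p then (1 : ℝ) else -1

/-- The quadratic form of signature `(p+1,q+1)` on `ℝ^{n+2}`, in block form
`[[0,0,1],[0,h,0],[1,0,0]]`. -/
def htMat (p q : ℕ) : Matrix (Idx p q) (Idx p q) ℝ :=
  Matrix.of fun I J =>
    match I, J with
    | Sum.inl _, Sum.inr (Sum.inr _) => (1 : ℝ)
    | Sum.inr (Sum.inr _), Sum.inl _ => 1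
    | Sum.inr (Sum.inl i), Sum.inr (Sum.inl j) => hMat p q i j
    | _, _ => 0

/-- The first standard basis vector `e₀` of `ℝ^{n+2}`. -/
def e0 (p q : ℕ) : Idx p q → ℝ := fun I =>
  match I with
  | Sum.inl _ => 1
  | _ => 0

/-- `c = -(2a)⁻¹ b h⁻¹ bᵀ`. -/
def cVal (p q : ℕ) (a : ℝ) (b : Fin (p + q) → ℝ) : ℝ :=
  -(2 * a)⁻¹ * (b ⬝ᵥ ((hMat p q)⁻¹ *ᵥ b))

/-- `d = -a⁻¹ m h⁻¹ bᵀ`. -/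
def dVec (p q : ℕ) (a : ℝ) (b : Fin (p + q) → ℝ)
    (m : Matrix (Fin (p + q)) (Fin (p + q)) ℝ) : Fin (p + q) → ℝ :=
  (-a⁻¹) • (m *ᵥ ((hMat p q)⁻¹ *ᵥ b))

/-- The element `p(a,b,m)` of the parabolic subgroup, in block form
`[[a,b,c],[0,m,d],[0,0,a⁻¹]]`. -/
def pMat (p q : ℕ) (a : ℝ) (b : Fin (p + q) → ℝ)
    (m : Matrix (Fin (p + q)) (Fin (p + q)) ℝ) : Matrix (Idx p q) (Idx p q) ℝ :=
  Matrix.of fun I J =>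
    match I, J with
    | Sum.inl _, Sum.inl _ => a
    | Sum.inl _, Sum.inr (Sum.inl j) => b j
    | Sum.inl _, Sum.inr (Sum.inr _) => cVal p q a b
    | Sum.inr (Sum.inl i), Sum.inr (Sum.inl j) => m i j
    | Sum.inr (Sum.inl i), Sum.inr (Sum.inr _) => dVec p q a b m i
    | Sum.inr (Sum.inr _), Sum.inr (Sum.inr _) => a⁻¹
    | _, _ => 0

/-- `|x|² = xᵀ h x`. -/
def normSq (p q : ℕ) (x : Fin (p + q) → ℝ) : ℝ := x ⬝ᵥ (hMat p q *ᵥ x)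

/-- The denominator `D(x) = a + b x - ½ c |x|²`. -/
def Dden (p q : ℕ) (a : ℝ) (b x : Fin (p + q) → ℝ) : ℝ :=
  a + b ⬝ᵥ x - (1 / 2) * cVal p q a b * normSq p q x

/-- The conformal transformation `φ(x) = (m x - ½|x|² d)/D(x)`. -/
def phiMap (p q : ℕ) (a : ℝ) (b : Fin (p + q) → ℝ)
    (m : Matrix (Fin (p + q)) (Fin (p + q)) ℝ) (x : Fin (p + q) → ℝ) :
    Fin (p + q) → ℝ :=
  (Dden p q a b x)⁻¹ • (m *ᵥ x - ((1 / 2) * normSq p q x) • dVec p q a b m)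

/-- The conformal factor `Ω(x) = D(x)⁻¹`. -/
def OmegaFn (p q : ℕ) (a : ℝ) (b : Fin (p + q) → ℝ) (x : Fin (p + q) → ℝ) : ℝ :=
  (Dden p q a b x)⁻¹

/-- Jacobian matrix of a map at a point: `J i j = ∂ⱼ φⁱ (x)`. -/
def jacobianAt (p q : ℕ) (φ : (Fin (p + q) → ℝ) → (Fin (p + q) → ℝ))
    (x : Fin (p + q) → ℝ) : Matrix (Fin (p + q)) (Fin (p + q)) ℝ :=
  Matrix.of fun i j => fderiv ℝ φ x (Pi.single j 1) i

/-- Row vector of partial derivatives of a scalar function at a point. -/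
def gradAt (p q : ℕ) (f : (Fin (p + q) → ℝ) → ℝ) (x : Fin (p + q) → ℝ) :
    Fin (p + q) → ℝ :=
  fun j => fderiv ℝ f x (Pi.single j 1)

/-- The inclusion `x ↦ (1, x, -½|x|²)` of `ℝⁿ` into the null cone. -/
def liftVec (p q : ℕ) (x : Fin (p + q) → ℝ) : Idx p q → ℝ :=
  Sum.elim (fun _ => (1 : ℝ)) (Sum.elim x (fun _ => -(1 / 2) * normSq p q x))


section Aux

variable (p q : ℕ)

lemma hh_sq : hMat p q * hMat p q = 1 := by
  rw [hMat, Matrix.diagonal_mul_diagonal]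
  have : (fun i : Fin (p + q) =>
      (if (i : ℕ) < p then (1:ℝ) else -1) * if (i : ℕ) < p then (1:ℝ) else -1)
      = fun _ => (1:ℝ) := by
    funext i; split_ifs <;> norm_num
  rw [this, Matrix.diagonal_one]

lemma hinv_eq : (hMat p q)⁻¹ = hMat p q :=
  Matrix.inv_eq_right_inv (hh_sq p q)

lemma hh_vec (v : Fin (p + q) → ℝ) : hMat p q *ᵥ (hMat p q *ᵥ v) = v := by
  rw [Matrix.mulVec_mulVec, hh_sq, Matrix.one_mulVec]

lemma h_symm_dot (u v : Fin (p + q) → ℝ) :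
    u ⬝ᵥ (hMat p q *ᵥ v) = v ⬝ᵥ (hMat p q *ᵥ u) := by
  have hsym : (hMat p q)ᵀ = hMat p q := by simp [hMat]
  rw [Matrix.dotProduct_mulVec u, ← Matrix.mulVec_transpose, hsym, dotProduct_comm]

lemma mbilin (m : Matrix (Fin (p + q)) (Fin (p + q)) ℝ)
    (hm : mᵀ * hMat p q * m = hMat p q) (u v : Fin (p + q) → ℝ) :
    (m *ᵥ u) ⬝ᵥ (hMat p q *ᵥ (m *ᵥ v)) = u ⬝ᵥ (hMat p q *ᵥ v) := by
  rw [Matrix.mulVec_mulVec, Matrix.dotProduct_mulVec, ← Matrix.vecMul_transpose,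
    Matrix.vecMul_vecMul, ← Matrix.mul_assoc, hm, ← Matrix.dotProduct_mulVec]

lemma normSq_sub (u w : Fin (p + q) → ℝ) :
    normSq p q (u - w)
      = normSq p q u - u ⬝ᵥ (hMat p q *ᵥ w) - w ⬝ᵥ (hMat p q *ᵥ u) + normSq p q w := by
  simp only [normSq, Matrix.mulVec_sub, dotProduct_sub, sub_dotProduct]
  ring

lemma normSq_smul (c : ℝ) (v : Fin (p + q) → ℝ) :
    normSq p q (c • v) = c * c * normSq p q v := by
  simp only [normSq, Matrix.mulVec_smul, dotProduct_smul, smul_dotProduct,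
    smul_eq_mul]
  ring

lemma row_inl (a : ℝ) (b : Fin (p + q) → ℝ) (m : Matrix (Fin (p + q)) (Fin (p + q)) ℝ)
    (v : Idx p q → ℝ) :
    (pMat p q a b m *ᵥ v) (Sum.inl ())
      = a * v (Sum.inl ()) + b ⬝ᵥ (fun j => v (Sum.inr (Sum.inl j)))
        + cVal p q a b * v (Sum.inr (Sum.inr ())) := by
  simp [Matrix.mulVec, dotProduct, pMat, Fintype.sum_sum_type]
  ring

lemma row_mid (a : ℝ) (b : Fin (p + q) → ℝ) (m : Matrix (Fin (p + q)) (Fin (p + q)) ℝ)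
    (v : Idx p q → ℝ) (i : Fin (p + q)) :
    (pMat p q a b m *ᵥ v) (Sum.inr (Sum.inl i))
      = (m *ᵥ (fun j => v (Sum.inr (Sum.inl j)))) i
        + dVec p q a b m i * v (Sum.inr (Sum.inr ())) := by
  simp [Matrix.mulVec, dotProduct, pMat, Fintype.sum_sum_type]

lemma row_inr (a : ℝ) (b : Fin (p + q) → ℝ) (m : Matrix (Fin (p + q)) (Fin (p + q)) ℝ)
    (v : Idx p q → ℝ) :
    (pMat p q a b m *ᵥ v) (Sum.inr (Sum.inr ()))
      = a⁻¹ * v (Sum.inr (Sum.inr ())) := by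
  simp [Matrix.mulVec, dotProduct, pMat, Fintype.sum_sum_type]

end Aux

/-- The linear action of `p(a,b,m)` on the null cone corresponds, in the affine
chart `x ↦ [(1, x, -½|x|²)]`, to the conformal transformation `φ_{a,b,m}`:
`p(a,b,m) (1, x, -½|x|²) = D(x) (1, φ(x), -½|φ(x)|²)`. -/
theorem statement4 (p q : ℕ) (hn : 3 ≤ p + q)
    (a : ℝ) (ha : 0 < a) (b : Fin (p + q) → ℝ)
    (m : Matrix (Fin (p + q)) (Fin (p + q)) ℝ)
    (hm : mᵀ * hMat p q * m = hMat p q)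
    (x : Fin (p + q) → ℝ) (hx : Dden p q a b x ≠ 0) :
    pMat p q a b m *ᵥ liftVec p q x
      = Dden p q a b x • liftVec p q (phiMap p q a b m x) := by
  set D := Dden p q a b x with hD
  set X := normSq p q x with hX
  set K := b ⬝ᵥ (hMat p q *ᵥ b) with hK
  have ha0 : a ≠ 0 := ha.ne'
  have hdinv : (hMat p q)⁻¹ *ᵥ b = hMat p q *ᵥ b := by rw [hinv_eq]
  have hcval : cVal p q a b = -(2 * a)⁻¹ * K := by rw [cVal, hdinv]
  have hdvec : dVec p q a b m = (-a⁻¹) • (m *ᵥ (hMat p q *ᵥ b)) := by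
    rw [dVec, hdinv]
  -- bilinear identities
  have hA : (m *ᵥ x) ⬝ᵥ (hMat p q *ᵥ (m *ᵥ x)) = X := mbilin p q m hm x x
  have hB : (m *ᵥ x) ⬝ᵥ (hMat p q *ᵥ (m *ᵥ (hMat p q *ᵥ b))) = b ⬝ᵥ x := by
    rw [mbilin p q m hm, hh_vec, dotProduct_comm]
  have hC : (m *ᵥ (hMat p q *ᵥ b)) ⬝ᵥ (hMat p q *ᵥ (m *ᵥ (hMat p q *ᵥ b))) = K := by
    rw [mbilin p q m hm, hh_vec, dotProduct_comm, hK]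
  have hnd : normSq p q (phiMap p q a b m x)
      = D⁻¹ * D⁻¹ * (X + X * a⁻¹ * (b ⬝ᵥ x)
        + ((1/2) * X)^2 * (a⁻¹ * a⁻¹) * K) := by
    rw [phiMap, normSq_smul, ← hD, ← hX]
    rw [normSq_sub]
    have h1 : normSq p q (m *ᵥ x) = X := by rw [normSq]; exact hA
    have h2 : (m *ᵥ x) ⬝ᵥ (hMat p q *ᵥ (((1/2) * X) • dVec p q a b m))
        = -(1/2) * X * a⁻¹ * (b ⬝ᵥ x) := by
      rw [hdvec, Matrix.mulVec_smul, dotProduct_smul, Matrix.mulVec_smul,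
        dotProduct_smul, hB]
      simp; ring
    have h3 : (((1/2) * X) • dVec p q a b m) ⬝ᵥ (hMat p q *ᵥ (m *ᵥ x))
        = -(1/2) * X * a⁻¹ * (b ⬝ᵥ x) := by
      rw [h_symm_dot]; exact h2
    have h4 : normSq p q (((1/2) * X) • dVec p q a b m)
        = ((1/2) * X)^2 * (a⁻¹ * a⁻¹) * K := by
      rw [normSq_smul, hdvec, normSq_smul, normSq]
      rw [hC]; ring
    rw [h1, h2, h3, h4]; ring
  funext I
  rcases I with u | i | u
  · rw [row_inl, Pi.smul_apply]
    simp only [liftVec, Sum.elim_inl, Sum.elim_inr, smul_eq_mul]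
    rw [hD, Dden, ← hX]; ring
  · rw [row_mid, Pi.smul_apply]
    simp only [liftVec, Sum.elim_inl, Sum.elim_inr, smul_eq_mul]
    rw [phiMap, ← hD, ← hX]
    simp only [Pi.smul_apply, Pi.sub_apply, smul_eq_mul]
    field_simp
    ring
  · rw [row_inr, Pi.smul_apply]
    simp only [liftVec, Sum.elim_inr, smul_eq_mul]
    rw [hnd]
    have hkey : a * (X + X * a⁻¹ * (b ⬝ᵥ x) + (1 / 2 * X) ^ 2 * (a⁻¹ * a⁻¹) * K)
        = X * D := by
      rw [hD, Dden, hcval, ← hX]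
      field_simp
      ring
    have hS : X + X * a⁻¹ * (b ⬝ᵥ x) + (1 / 2 * X) ^ 2 * (a⁻¹ * a⁻¹) * K
        = a⁻¹ * (X * D) := by
      rw [← hkey, inv_mul_cancel_left₀ ha0]
    rw [hS]
    field_simp
    ring
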